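/- For real ω, the scattering matrix G(ω) = -(-Lω² + iRω + K)(-Lω² - iRω + K)⁻¹ is unitary, where L, K are real positive semidefinite symmetric n×n matrices with L invertible, R > 0 is a real scalar, and -Lω² - iRω + K is invertible. -/
import Mathlib


open Matrix Complex

/-- The scattering matrix `G(ω) = -(-Lω² + iRω + K)(-Lω² - iRω + K)⁻¹` is unitary
for real `ω`, with `L, K` real PSD symmetric, `L` invertible, `R > 0`. -/
theorem scattering_matrix_unitary (n : ℕ)
    (L K : Matrix (Fin n) (Fin n) ℝ)
    (hL : L.PosSemidef) (hK : K.PosSemidef) (hLinv : IsUnit L)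
    (R ω : ℝ) (hR : 0 < R)
    (Mm Mp G : Matrix (Fin n) (Fin n) ℂ)
    (hMm : Mm = (-(ω ^ 2 : ℂ)) • (L.map (Complex.ofReal))
        - ((Complex.I * R * ω) • (1 : Matrix (Fin n) (Fin n) ℂ))
        + K.map (Complex.ofReal))
    (hMp : Mp = (-(ω ^ 2 : ℂ)) • (L.map (Complex.ofReal))
        + ((Complex.I * R * ω) • (1 : Matrix (Fin n) (Fin n) ℂ))
        + K.map (Complex.ofReal))
    (hMminv : IsUnit Mm)
    (hG : G = -(Mp * Mm⁻¹)) :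
    Gᴴ * G = 1 ∧ G * Gᴴ = 1 := by
  have hMap : ∀ M : Matrix (Fin n) (Fin n) ℝ, M.IsHermitian →
      (M.map (Complex.ofReal))ᴴ = M.map (Complex.ofReal) := by
    intro M hM
    rw [← Matrix.conjTranspose_map (Complex.ofReal) (fun a => by simp), hM]
  have hstar : star (Complex.I * R * ω) = -(Complex.I * R * ω) := by
    simp [Complex.ext_iff]
  have hMmH : Mmᴴ = Mp := by
    rw [hMm, hMp, Matrix.conjTranspose_add, Matrix.conjTranspose_sub,
      Matrix.conjTranspose_smul, Matrix.conjTranspose_smul, Matrix.conjTranspose_one,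
      hMap L hL.isHermitian, hMap K hK.isHermitian, hstar, neg_smul, sub_neg_eq_add]
    congr 2
    simp
  have hMpH : Mpᴴ = Mm := by
    rw [← hMmH, Matrix.conjTranspose_conjTranspose]
  have hMpinv : IsUnit Mp := by
    rw [← hMmH, Matrix.isUnit_conjTranspose]; exact hMminv
  have hMmd : IsUnit Mm.det := (Matrix.isUnit_iff_isUnit_det _).mp hMminv
  have hMpd : IsUnit Mp.det := (Matrix.isUnit_iff_isUnit_det _).mp hMpinv
  have hcomm : Mm * Mp = Mp * Mm := by
    rw [hMm, hMp]
    simp only [add_mul, mul_add, sub_mul, mul_sub, Matrix.smul_mul, Matrix.mul_smul,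
      Matrix.one_mul, Matrix.mul_one, smul_smul]
    ring_nf
    abel
  have hcommInv : Mm⁻¹ * Mp⁻¹ = Mp⁻¹ * Mm⁻¹ := by
    rw [← Matrix.mul_inv_rev, ← Matrix.mul_inv_rev, hcomm]
  have hGH : Gᴴ = -(Mp⁻¹ * Mm) := by
    rw [hG, Matrix.conjTranspose_neg, Matrix.conjTranspose_mul,
      Matrix.conjTranspose_nonsing_inv, hMmH, hMpH]
  constructor
  · rw [hGH, hG, Matrix.neg_mul, Matrix.mul_neg, neg_neg,
      Matrix.mul_assoc, ← Matrix.mul_assoc Mm, hcomm, Matrix.mul_assoc,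
      Matrix.mul_nonsing_inv _ hMmd, Matrix.mul_one,
      Matrix.nonsing_inv_mul _ hMpd]
  · rw [hGH, hG, Matrix.neg_mul, Matrix.mul_neg, neg_neg,
      Matrix.mul_assoc, ← Matrix.mul_assoc Mm⁻¹, hcommInv,
      Matrix.mul_assoc, Matrix.nonsing_inv_mul _ hMmd, Matrix.mul_one,
      Matrix.mul_nonsing_inv _ hMpd]
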